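/- For any perfect matching M between the blue vertices and red vertices of a signed complete graph (with equal numbers of red and blue vertices) such that every matched pair lies in the same cluster of a given clustering C, the weight of M is at most twice the number of disagreements of C, where the weight of a matched edge (u,v) is the number of vertices w (other than u,v) such that the edges (u,w) and (v,w) have different signs, plus 1 if (u,v) is negative. -/

import Mathlib

open Finset

/-- An edge `{u,v}` is a disagreement of clustering `c`: negative inside a cluster,
or positive between clusters. `sign u v = true` means positive. -/
def isDis {V : Type*} (sign : V → V → Bool) (c : V → ℕ) (u v : V) : Bool :=
  if c u = c v then !(sign u v) else sign u v

/-- Number of disagreements of a clustering (unordered edges). -/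
def numDis {V : Type*} [Fintype V] [DecidableEq V] (sign : V → V → Bool) (c : V → ℕ) : ℕ :=
  ((Finset.univ : Finset (V × V)).filter
    (fun p => p.1 ≠ p.2 ∧ isDis sign c p.1 p.2 = true)).card / 2

/-- Weight of a matched pair `(u,v)`: number of vertices `w ≠ u,v` on which the
signs to `u` and `v` differ, plus `1` if `(u,v)` is negative. -/
def pairW {V : Type*} [Fintype V] [DecidableEq V] (sign : V → V → Bool) (u v : V) : ℕ :=
  ((Finset.univ : Finset V).filter
    (fun w => w ≠ u ∧ w ≠ v ∧ sign u w ≠ sign v w)).card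
  + (if sign u v = false then 1 else 0)

lemma isDis_symm {V : Type*} (sign : V → V → Bool) (hsym : ∀ u v, sign u v = sign v u)
    (c : V → ℕ) (u v : V) : isDis sign c u v = isDis sign c v u := by
  unfold isDis
  rw [hsym u v]
  by_cases h : c u = c v
  · rw [if_pos h, if_pos h.symm]
  · rw [if_neg h, if_neg (fun h' => h h'.symm)]

lemma even_D {V : Type*} [Fintype V] [DecidableEq V]
    (sign : V → V → Bool) (hsym : ∀ u v, sign u v = sign v u) (c : V → ℕ) :
    2 ∣ ((Finset.univ : Finset (V × V)).filter
      (fun p => p.1 ≠ p.2 ∧ isDis sign c p.1 p.2 = true)).card := by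
  classical
  set e := Fintype.equivFin V with he
  set D := ((Finset.univ : Finset (V × V)).filter
      (fun p => p.1 ≠ p.2 ∧ isDis sign c p.1 p.2 = true)) with hD
  have hsplit : D = D.filter (fun p => e p.1 < e p.2) ∪ D.filter (fun p => e p.2 < e p.1) := by
    ext p
    simp only [mem_union, mem_filter, hD, mem_univ, true_and]
    constructor
    · rintro ⟨hne, hd⟩
      rcases lt_or_gt_of_ne (fun h => hne (e.injective h)) with h | h
      · exact Or.inl ⟨⟨hne, hd⟩, h⟩
      · exact Or.inr ⟨⟨hne, hd⟩, h⟩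
    · rintro (⟨h, _⟩ | ⟨h, _⟩) <;> exact h
  have hdisj : Disjoint (D.filter (fun p => e p.1 < e p.2)) (D.filter (fun p => e p.2 < e p.1)) := by
    rw [Finset.disjoint_left]
    intro p hp hp'
    rw [mem_filter] at hp hp'
    exact absurd (lt_trans hp.2 hp'.2) (lt_irrefl _)
  have himg : D.filter (fun p => e p.2 < e p.1) = (D.filter (fun p => e p.1 < e p.2)).image Prod.swap := by
    ext p
    simp only [mem_image, mem_filter, hD, mem_univ, true_and]
    constructor
    · rintro ⟨⟨hne, hd⟩, hlt⟩
      exact ⟨p.swap, ⟨⟨hne.symm, by rw [isDis_symm sign hsym]; exact hd⟩, hlt⟩, Prod.swap_swap p⟩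
    · rintro ⟨q, ⟨⟨hne, hd⟩, hlt⟩, rfl⟩
      exact ⟨⟨hne.symm, by rw [isDis_symm sign hsym]; exact hd⟩, hlt⟩
  have hcard : (D.filter (fun p => e p.2 < e p.1)).card = (D.filter (fun p => e p.1 < e p.2)).card := by
    rw [himg]
    exact Finset.card_image_of_injective _ Prod.swap_injective
  rw [hsplit, Finset.card_union_of_disjoint hdisj, hcard]
  exact ⟨_, (two_mul _).symm⟩

/-- any perfect matching between blue and red vertices whose matched
pairs share clusters has weight at most twice the number of disagreements. -/
theorem stmt0 {V : Type*} [Fintype V] [DecidableEq V]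
    (sign : V → V → Bool) (hsym : ∀ u v, sign u v = sign v u)
    (col : V → Bool)  -- true = red, false = blue
    (hbal : (univ.filter fun v => col v = false).card
          = (univ.filter fun v => col v = true).card)
    (c : V → ℕ)
    (f : V → V)
    (hfcol : ∀ b, col b = false → col (f b) = true)
    (hinj : ∀ b b', col b = false → col b' = false → f b = f b' → b = b')
    (hsurj : ∀ r, col r = true → ∃ b, col b = false ∧ f b = r)
    (hsame : ∀ b, col b = false → c (f b) = c b) :
    ∑ b ∈ univ.filter (fun v => col v = false), pairW sign b (f b)
      ≤ 2 * numDis sign c := by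
  classical
  set D := ((Finset.univ : Finset (V × V)).filter
      (fun p => p.1 ≠ p.2 ∧ isDis sign c p.1 p.2 = true)) with hD
  have h2 : 2 * numDis sign c = D.card := by
    unfold numDis
    exact Nat.mul_div_cancel' (even_D sign hsym c)
  rw [h2]
  set B := univ.filter (fun v => col v = false) with hB
  set T : V → Finset (V × V) := fun b => D.filter (fun p => p.1 = b ∨ p.1 = f b) with hT
  have hne : ∀ b, col b = false → b ≠ f b := by
    intro b hb heq
    have := hfcol b hb
    rw [← heq, hb] at this
    simp at this
  -- step 3: pairW ≤ card (T b)
  have step3 : ∀ b ∈ B, pairW sign b (f b) ≤ (T b).card := by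
    intro b hb
    rw [hB, mem_filter] at hb
    have hb' := hb.2
    have hcb : c (f b) = c b := hsame b hb'
    have hbne : b ≠ f b := hne b hb'
    set W := (Finset.univ : Finset V).filter
      (fun w => w ≠ b ∧ w ≠ f b ∧ sign b w ≠ sign (f b) w) with hW
    set S := if sign b (f b) = false then insert (f b) W else W with hS
    have hfbW : f b ∉ W := by
      intro h
      rw [hW, mem_filter] at h
      exact h.2.2.1 rfl
    have hScard : pairW sign b (f b) = S.card := by
      unfold pairW
      rw [hS]
      by_cases h : sign b (f b) = false
      · rw [if_pos h, if_pos h, Finset.card_insert_of_notMem hfbW]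
      · rw [if_neg h, if_neg h, add_zero]
    rw [hScard]
    apply Finset.card_le_card_of_injOn
      (fun w => ((if isDis sign c b w = true then b else (f b)), w))
    · intro w hw
      dsimp only
      have hmem : ∀ x, x ≠ w → isDis sign c x w = true → (x = b ∨ x = f b) →
          (x, w) ∈ T b := by
        intro x hxw hdx hor
        rw [hT]
        simp only [mem_filter, hD, mem_univ, true_and]
        exact ⟨⟨hxw, hdx⟩, hor⟩
      rw [hS] at hw
      have hWcase : w ∈ W → ((if isDis sign c b w = true then b else (f b)), w) ∈ T b := by
        intro hwW
        rw [hW, mem_filter] at hwW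
        obtain ⟨-, hwb, hwf, hws⟩ := hwW
        by_cases hd : isDis sign c b w = true
        · simp only [if_pos hd]
          exact hmem b (fun h => hwb h.symm) hd (Or.inl rfl)
        · simp only [if_neg hd]
          have hdf : isDis sign c (f b) w = true := by
            unfold isDis at hd ⊢
            rw [hcb]
            by_cases h : c b = c w
            · rw [if_pos h] at hd ⊢
              cases h1 : sign b w <;> cases h2 : sign (f b) w <;> simp_all
            · rw [if_neg h] at hd ⊢
              cases h1 : sign b w <;> cases h2 : sign (f b) w <;> simp_all
          exact hmem (f b) (fun h => hwf h.symm) hdf (Or.inr rfl)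
      by_cases hneg : sign b (f b) = false
      · rw [if_pos hneg, Finset.mem_coe, mem_insert] at hw
        rcases hw with heq | hw
        · subst heq
          have hd : isDis sign c b (f b) = true := by
            unfold isDis
            rw [if_pos hcb.symm, hneg]
            rfl
          simp only [if_pos hd]
          exact hmem b hbne hd (Or.inl rfl)
        · exact hWcase hw
      · rw [if_neg hneg] at hw
        exact hWcase hw
    · intro w1 _ w2 _ h
      exact congrArg Prod.snd h
  -- step 2: sum of card (T b) ≤ card D
  calc ∑ b ∈ B, pairW sign b (f b) ≤ ∑ b ∈ B, (T b).card := Finset.sum_le_sum step3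
    _ = (B.biUnion T).card := by
        rw [Finset.card_biUnion]
        intro b hb b' hb' hbb'
        rw [hB, Finset.mem_coe, mem_filter] at hb hb'
        rw [Function.onFun, Finset.disjoint_left]
        intro p hp hp'
        rw [hT] at hp hp'
        simp only [mem_filter] at hp hp'
        rcases hp.2 with h1 | h1 <;> rcases hp'.2 with h2 | h2
        · exact hbb' (h1.symm.trans h2)
        · have heq : b = f b' := h1.symm.trans h2
          have hcol := hfcol b' hb'.2
          rw [← heq, hb.2] at hcol
          simp at hcol
        · have heq : f b = b' := h1.symm.trans h2
          have hcol := hfcol b hb.2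
          rw [heq, hb'.2] at hcol
          simp at hcol
        · exact hbb' (hinj b b' hb.2 hb'.2 (h1.symm.trans h2))
    _ ≤ D.card := Finset.card_le_card (by
        intro p hp
        rw [Finset.mem_biUnion] at hp
        obtain ⟨b, _, hpb⟩ := hp
        rw [hT, mem_filter] at hpb
        exact hpb.1)
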